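/- The subgroup of PSL₂(ℤ) generated by the images of the four matrices BA⁻¹, A⁻¹B, B⁻¹A⁻¹B², and B⁻³ is a subgroup of Γ̄(2) of index 3 in Γ̄(2). -/

import Mathlib

/-- `SL(2, ℤ)`. -/
abbrev SL2Z := Matrix.SpecialLinearGroup (Fin 2) ℤ

/-- `PSL₂(ℤ)`, the quotient of `SL(2, ℤ)` by its center `{±I}`. -/
abbrev PSL2Z := SL2Z ⧸ Subgroup.center SL2Z

/-- The projection `SL(2, ℤ) → PSL₂(ℤ)`. -/
def projSL : SL2Z →* PSL2Z := QuotientGroup.mk' (Subgroup.center SL2Z)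

/-- `Γ̄(N)`, the image of the principal congruence subgroup `Γ(N)` in `PSL₂(ℤ)`. -/
def GammaBar (N : ℕ) : Subgroup PSL2Z := (CongruenceSubgroup.Gamma N).map projSL

/-- The matrix `A = [[1,2],[0,1]]` in `SL(2, ℤ)`. -/
def matA : SL2Z := ⟨!![1, 2; 0, 1], by norm_num [Matrix.det_fin_two_of]⟩

/-- The matrix `B = [[1,0],[2,1]]` in `SL(2, ℤ)`. -/
def matB : SL2Z := ⟨!![1, 0; 2, 1], by norm_num [Matrix.det_fin_two_of]⟩

/-- The matrix `T = [[1,1],[0,1]]` in `SL(2, ℤ)`. -/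
def matT : SL2Z := ⟨!![1, 1; 0, 1], by norm_num [Matrix.det_fin_two_of]⟩

/-- The matrix `L = [[1,0],[1,1]]` in `SL(2, ℤ)`. -/
def matL : SL2Z := ⟨!![1, 0; 1, 1], by norm_num [Matrix.det_fin_two_of]⟩

/-- `Ā`, the image of `A` in `PSL₂(ℤ)`. -/
def Abar : PSL2Z := projSL matA

/-- `B̄`, the image of `B` in `PSL₂(ℤ)`. -/
def Bbar : PSL2Z := projSL matB

def mNeg : SL2Z := ⟨!![-1, 0; 0, -1], by norm_num [Matrix.det_fin_two_of]⟩

lemma mNeg_mem_center : mNeg ∈ Subgroup.center SL2Z := by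
  rw [Subgroup.mem_center_iff]
  intro g
  ext i j
  fin_cases i <;> fin_cases j <;>
    simp only [Matrix.SpecialLinearGroup.coe_mul] <;>
    simp [mNeg, Matrix.mul_apply, Fin.sum_univ_two]

lemma center_eq (g : SL2Z) (hg : g ∈ Subgroup.center SL2Z) : g = 1 ∨ g = mNeg := by
  have hA := (Subgroup.mem_center_iff.1 hg) matA
  have hB := (Subgroup.mem_center_iff.1 hg) matB
  have hA00 := congr_fun (congr_fun (congr_arg Subtype.val hA) 0) 1
  have hA01 := congr_fun (congr_fun (congr_arg Subtype.val hA) 0) 0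
  have hB00 := congr_fun (congr_fun (congr_arg Subtype.val hB) 1) 0
  simp only [Matrix.SpecialLinearGroup.coe_mul] at hA00 hA01 hB00
  simp [matA, matB, Matrix.mul_apply, Fin.sum_univ_two] at hA00 hA01 hB00
  -- hA00 : relation giving g 0 0 = g 1 1, hA01: g 1 0 = 0?, hB00 : ?
  have hdet : g.1 0 0 * g.1 1 1 - g.1 0 1 * g.1 1 0 = 1 := by
    have := g.2
    rwa [Matrix.det_fin_two] at this
  have h1 : g.1 1 0 = 0 := by omega
  have hgA := congr_fun (congr_fun (congr_arg Subtype.val hB) 0) 0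
  simp only [Matrix.SpecialLinearGroup.coe_mul] at hgA
  simp [matB, Matrix.mul_apply, Fin.sum_univ_two] at hgA
  have h2 : g.1 0 1 = 0 := by omega
  have h3 : g.1 0 0 = g.1 1 1 := by
    simp [h1, h2] at hA00 hA01 hB00 ⊢
    omega
  have hmul : g.1 0 0 * g.1 1 1 = 1 := by
    rw [h1, h2] at hdet
    linarith
  have h4 : g.1 0 0 = 1 ∨ g.1 0 0 = -1 :=
    Int.isUnit_iff.mp (IsUnit.of_mul_eq_one _ hmul)
  rcases h4 with h4 | h4
  · left
    ext i j
    fin_cases i <;> fin_cases j <;>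
      simp_all
  · right
    ext i j
    fin_cases i <;> fin_cases j <;>
      simp_all [mNeg]

lemma projSL_mNeg : projSL mNeg = 1 := by
  simp [projSL, QuotientGroup.mk'_apply, QuotientGroup.eq_one_iff, mNeg_mem_center]

/-! ### Sanov ping-pong -/

def sstep : Bool × Bool → ℤ × ℤ → ℤ × ℤ
  | (true, true), v => (v.1 + 2 * v.2, v.2)
  | (true, false), v => (v.1 - 2 * v.2, v.2)
  | (false, true), v => (v.1, v.2 + 2 * v.1)
  | (false, false), v => (v.1, v.2 - 2 * v.1)

def act (M : SL2Z) (v : ℤ × ℤ) : ℤ × ℤ :=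
  (M.1 0 0 * v.1 + M.1 0 1 * v.2, M.1 1 0 * v.1 + M.1 1 1 * v.2)

lemma act_one (v : ℤ × ℤ) : act 1 v = v := by
  simp [act]

lemma act_mul (M N : SL2Z) (v : ℤ × ℤ) : act (M * N) v = act M (act N v) := by
  simp only [act, Matrix.SpecialLinearGroup.coe_mul, Matrix.mul_apply, Fin.sum_univ_two,
    Prod.mk.injEq]
  constructor <;> ring

def matAi : SL2Z := ⟨!![1, -2; 0, 1], by norm_num [Matrix.det_fin_two_of]⟩
def matBi : SL2Z := ⟨!![1, 0; -2, 1], by norm_num [Matrix.det_fin_two_of]⟩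

lemma matA_inv : matA⁻¹ = matAi := by
  apply inv_eq_of_mul_eq_one_right
  ext i j
  fin_cases i <;> fin_cases j <;>
    simp only [Matrix.SpecialLinearGroup.coe_mul] <;>
    norm_num [matA, matAi, Matrix.mul_apply, Fin.sum_univ_two]

lemma matB_inv : matB⁻¹ = matBi := by
  apply inv_eq_of_mul_eq_one_right
  ext i j
  fin_cases i <;> fin_cases j <;>
    simp only [Matrix.SpecialLinearGroup.coe_mul] <;>
    norm_num [matB, matBi, Matrix.mul_apply, Fin.sum_univ_two]

def gf : Bool → SL2Z := fun b => if b then matA else matB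

lemma act_gen (ℓ : Bool × Bool) (v : ℤ × ℤ) :
    act (cond ℓ.2 (gf ℓ.1) (gf ℓ.1)⁻¹) v = sstep ℓ v := by
  obtain ⟨b, s⟩ := ℓ
  cases b <;> cases s <;>
    simp only [gf, cond_true, cond_false, Bool.false_eq_true, ↓reduceIte, matA_inv, matB_inv] <;>
    simp [gf, matA_inv, matB_inv, act, sstep, matA, matB, matAi, matBi] <;> ring_nf <;>
    constructor <;> ring

lemma evalList (L : List (Bool × Bool)) (v : ℤ × ℤ) :
    act ((L.map fun x => cond x.2 (gf x.1) (gf x.1)⁻¹).prod) v = L.foldr sstep v := by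
  induction L generalizing v with
  | nil => simp [act_one]
  | cons ℓ L ih =>
    simp only [List.map_cons, List.prod_cons, List.foldr_cons, act_mul, ih, act_gen]

def Pos : Bool → ℤ → ℤ → Prop
  | true, x, y => (0 ≤ x ∧ 0 ≤ y) ∨ (x ≤ 0 ∧ y ≤ 0)
  | false, x, y => (0 ≤ x ∧ y ≤ 0) ∨ (x ≤ 0 ∧ 0 ≤ y)

def SInv : Bool → Bool → ℤ × ℤ → Prop
  | true, s, v => v.2.natAbs < v.1.natAbs ∧ v.2 ≠ 0 ∧ Pos s v.1 v.2
  | false, s, v => v.1.natAbs < v.2.natAbs ∧ v.1 ≠ 0 ∧ Pos s v.1 v.2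

lemma stepA (s : Bool) (v : ℤ × ℤ) (h : v.1.natAbs < v.2.natAbs) :
    SInv true s (sstep (true, s) v) := by
  cases s <;> simp only [SInv, Pos, sstep] <;> omega

lemma stepA2 (s : Bool) (v : ℤ × ℤ) (h : SInv true s v) :
    SInv true s (sstep (true, s) v) := by
  cases s <;> simp only [SInv, Pos, sstep] at h ⊢ <;> omega

lemma stepB (s : Bool) (v : ℤ × ℤ) (h : v.2.natAbs < v.1.natAbs) :
    SInv false s (sstep (false, s) v) := by
  cases s <;> simp only [SInv, Pos, sstep] <;> omega

lemma stepB2 (s : Bool) (v : ℤ × ℤ) (h : SInv false s v) :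
    SInv false s (sstep (false, s) v) := by
  cases s <;> simp only [SInv, Pos, sstep] at h ⊢ <;> omega

def NC (L : List (Bool × Bool)) : Prop :=
  ∀ (L₂ L₃ : List (Bool × Bool)) (x b : Bool), L ≠ L₂ ++ (x, b) :: (x, !b) :: L₃

lemma NC.tail {ℓ : Bool × Bool} {L : List (Bool × Bool)} (h : NC (ℓ :: L)) : NC L := by
  intro L₂ L₃ x b hEq
  exact h (ℓ :: L₂) L₃ x b (by simp [hEq])

lemma key (L : List (Bool × Bool)) : ∀ (ℓ : Bool × Bool), NC (ℓ :: L) → ∀ (v : ℤ × ℤ),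
    (if ((ℓ :: L).getLast (by simp)).1 then v.1.natAbs < v.2.natAbs
      else v.2.natAbs < v.1.natAbs) →
    SInv ℓ.1 ℓ.2 (List.foldr sstep v (ℓ :: L)) := by
  induction L with
  | nil =>
    rintro ⟨b, s⟩ _ v hv
    simp only [List.getLast_singleton] at hv
    cases b
    · exact stepB s v (by simpa using hv)
    · exact stepA s v (by simpa using hv)
  | cons ℓ' L ih =>
    rintro ⟨b, s⟩ hNC v hv
    have hlast : ((⟨b, s⟩ :: ℓ' :: L).getLast (by simp)) = ((ℓ' :: L).getLast (by simp)) :=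
      List.getLast_cons (by simp)
    rw [hlast] at hv
    have hIH := ih ℓ' hNC.tail v hv
    obtain ⟨b', s'⟩ := ℓ'
    show SInv b s (sstep (b, s) (List.foldr sstep v ((b', s') :: L)))
    set u := List.foldr sstep v ((b', s') :: L) with hu
    by_cases hb : b = b'
    · subst hb
      have hs : s = s' := by
        by_contra hs
        refine hNC [] L b s ?_
        have : s' = !s := by revert hs; cases s <;> cases s' <;> simp
        rw [this]
        rfl
      subst hs
      cases b
      · exact stepB2 s u hIH
      · exact stepA2 s u hIH
    · cases b <;> cases b'
      · exact absurd rfl hb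
      · exact stepB s u hIH.1
      · exact stepA s u hIH.1
      · exact absurd rfl hb

def eSL : FreeGroup Bool →* SL2Z := FreeGroup.lift gf

lemma act_mNeg (v : ℤ × ℤ) : act mNeg v = (-v.1, -v.2) := by
  simp [act, mNeg]

theorem sanov (w : FreeGroup Bool) (hw : w ≠ 1) : eSL w ≠ 1 ∧ eSL w ≠ mNeg := by
  have hL : w.toWord ≠ [] := fun h => hw (FreeGroup.toWord_eq_nil_iff.1 h)
  have hNC : NC w.toWord := by
    intro L₂ L₃ x b hEq
    have : FreeGroup.reduce (α := Bool) w.toWord = L₂ ++ (x, b) :: (x, !b) :: L₃ := by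
      rw [FreeGroup.reduce_toWord]; exact hEq
    exact FreeGroup.reduce.not (p := False) this
  obtain ⟨ℓ, L, hLeq⟩ : ∃ ℓ L, w.toWord = ℓ :: L := by
    cases h : w.toWord with
    | nil => exact absurd h hL
    | cons a l => exact ⟨a, l, rfl⟩
  rw [hLeq] at hNC
  set g : Bool := ((ℓ :: L).getLast (by simp)).1 with hg
  set v₀ : ℤ × ℤ := cond g ((0 : ℤ), (1 : ℤ)) ((1 : ℤ), (0 : ℤ)) with hv₀
  have hv : (if g then v₀.1.natAbs < v₀.2.natAbs else v₀.2.natAbs < v₀.1.natAbs) := by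
    cases hgc : g <;> simp [hv₀, hgc]
  have hkey := key L ℓ hNC v₀ hv
  have heval : act (eSL w) v₀ = List.foldr sstep v₀ (ℓ :: L) := by
    have h1 : eSL w = eSL (FreeGroup.mk w.toWord) := by rw [FreeGroup.mk_toWord]
    rw [h1, hLeq]
    rw [show eSL (FreeGroup.mk (ℓ :: L)) =
      (((ℓ :: L).map fun x => cond x.2 (gf x.1) (gf x.1)⁻¹)).prod from FreeGroup.lift_mk]
    exact evalList (ℓ :: L) v₀
  constructor
  · intro h1
    rw [h1, act_one] at heval
    rw [← heval] at hkey
    obtain ⟨b, s⟩ := ℓ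
    cases b <;> cases hgc : g <;> rw [hgc] at hv₀ <;>
      simp [SInv, hv₀] at hkey
  · intro h1
    rw [h1, act_mNeg] at heval
    rw [← heval] at hkey
    obtain ⟨b, s⟩ := ℓ
    cases b <;> cases hgc : g <;> rw [hgc] at hv₀ <;>
      simp [SInv, hv₀] at hkey

def ePSL : FreeGroup Bool →* PSL2Z :=
  FreeGroup.lift (fun b => if b then Abar else Bbar)

lemma ePSL_eq : ePSL = projSL.comp eSL := by
  ext b
  cases b <;> simp [ePSL, eSL, gf, Abar, Bbar]

lemma ePSL_inj : Function.Injective ePSL := by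
  rw [injective_iff_map_eq_one]
  intro w hw
  by_contra hne
  have h1 : projSL (eSL w) = 1 := by
    rw [← MonoidHom.comp_apply, ← ePSL_eq]; exact hw
  have h2 : eSL w ∈ Subgroup.center SL2Z := by
    rwa [projSL, QuotientGroup.mk'_apply, QuotientGroup.eq_one_iff] at h1
  rcases center_eq _ h2 with h | h
  · exact (sanov w hne).1 h
  · exact (sanov w hne).2 h

/-! ### The subgroup and non-membership -/

def genSet : Set PSL2Z :=
  {Bbar * Abar⁻¹, Abar⁻¹ * Bbar, Bbar⁻¹ * Abar⁻¹ * Bbar ^ 2, Bbar⁻¹ ^ 3}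

def Hs : Subgroup PSL2Z := Subgroup.closure genSet

def xg : FreeGroup Bool := FreeGroup.of true
def yg : FreeGroup Bool := FreeGroup.of false

def wSet : Set (FreeGroup Bool) :=
  {yg * xg⁻¹, xg⁻¹ * yg, yg⁻¹ * xg⁻¹ * yg ^ 2, yg⁻¹ ^ 3}

lemma ePSL_x : ePSL xg = Abar := by simp [ePSL, xg]
lemma ePSL_y : ePSL yg = Bbar := by simp [ePSL, yg]

lemma himage : Hs = (Subgroup.closure wSet).map ePSL := by
  rw [MonoidHom.map_closure]
  unfold Hs genSet wSet
  congr 1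
  simp only [Set.image_insert_eq, Set.image_singleton, map_mul, map_inv, map_pow,
    ePSL_x, ePSL_y]

def phi3 : FreeGroup Bool →* Multiplicative (ZMod 3) :=
  FreeGroup.lift (fun _ => Multiplicative.ofAdd (1 : ZMod 3))

lemma phi3_ker : Subgroup.closure wSet ≤ phi3.ker := by
  rw [Subgroup.closure_le]
  rintro w (rfl | rfl | rfl | rfl) <;>
    simp only [MonoidHom.mem_ker, map_mul, map_inv, map_pow, phi3, xg, yg,
      FreeGroup.lift_apply_of, SetLike.mem_coe] <;> decide

lemma notmem_A : Abar ∉ Hs := by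
  intro h
  rw [himage, Subgroup.mem_map] at h
  obtain ⟨z, hz, hez⟩ := h
  rw [← ePSL_x] at hez
  have : z = xg := ePSL_inj hez
  subst this
  have := phi3_ker hz
  rw [MonoidHom.mem_ker] at this
  simp only [phi3, xg, FreeGroup.lift_apply_of] at this
  exact absurd this (by decide)

lemma notmem_A2 : Abar * Abar ∉ Hs := by
  intro h
  rw [himage, Subgroup.mem_map] at h
  obtain ⟨z, hz, hez⟩ := h
  have hez' : ePSL z = ePSL (xg * xg) := by rw [map_mul, ePSL_x]; exact hez
  have : z = xg * xg := ePSL_inj hez'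
  subst this
  have := phi3_ker hz
  rw [MonoidHom.mem_ker] at this
  simp only [phi3, xg, map_mul, FreeGroup.lift_apply_of] at this
  exact absurd this (by decide)

/-! ### Explicit members of Hs -/

lemma hG1 : Bbar * Abar⁻¹ ∈ Hs := Subgroup.subset_closure (by left; rfl)
lemma hG2 : Abar⁻¹ * Bbar ∈ Hs := Subgroup.subset_closure (by right; left; rfl)
lemma hG3 : Bbar⁻¹ * Abar⁻¹ * Bbar ^ 2 ∈ Hs :=
  Subgroup.subset_closure (by right; right; left; rfl)
lemma hG4 : Bbar⁻¹ ^ 3 ∈ Hs := Subgroup.subset_closure (by right; right; right; rfl)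

-- x1 = A^3
lemma m1 : Abar * Abar * Abar ∈ Hs := by
  have : Abar * Abar * Abar =
      (Bbar * Abar⁻¹)⁻¹ * (Bbar⁻¹ ^ 3)⁻¹ * (Bbar⁻¹ * Abar⁻¹ * Bbar ^ 2)⁻¹ * (Abar⁻¹ * Bbar)⁻¹ := by
    group
  rw [this]
  exact mul_mem (mul_mem (mul_mem (inv_mem hG1) (inv_mem hG4)) (inv_mem hG3)) (inv_mem hG2)

-- x3 = A B A⁻¹ A⁻¹
lemma mx3 : Abar * Bbar * Abar⁻¹ * Abar⁻¹ ∈ Hs := by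
  have : Abar * Bbar * Abar⁻¹ * Abar⁻¹ =
      (Bbar * Abar⁻¹)⁻¹ * (Bbar⁻¹ ^ 3)⁻¹ * (Bbar⁻¹ * Abar⁻¹ * Bbar ^ 2) * (Bbar⁻¹ ^ 3) *
        (Bbar * Abar⁻¹) := by
    group
  rw [this]
  exact mul_mem (mul_mem (mul_mem (mul_mem (inv_mem hG1) (inv_mem hG4)) hG3) hG4) hG1

-- m3 = A⁻¹ A⁻¹ B A
lemma m3 : Abar⁻¹ * (Abar⁻¹ * (Bbar * Abar)) ∈ Hs := by
  have : Abar⁻¹ * (Abar⁻¹ * (Bbar * Abar)) =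
      (Abar * Abar * Abar)⁻¹ * (Abar * Bbar * Abar⁻¹ * Abar⁻¹) * (Abar * Abar * Abar) := by
    group
  rw [this]
  exact mul_mem (mul_mem (inv_mem m1) mx3) m1

-- m4 = B A A
lemma m4 : Bbar * Abar * Abar ∈ Hs := by
  have : Bbar * Abar * Abar = (Bbar * Abar⁻¹) * (Abar * Abar * Abar) := by group
  rw [this]
  exact mul_mem hG1 m1

-- m5 = A⁻¹ A⁻¹ B⁻¹
lemma m5 : Abar⁻¹ * (Abar⁻¹ * Bbar⁻¹) ∈ Hs := by
  have : Abar⁻¹ * (Abar⁻¹ * Bbar⁻¹) = (Bbar * Abar * Abar)⁻¹ := by group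
  rw [this]
  exact inv_mem m4

-- m6 = B⁻¹ A
lemma m6 : Bbar⁻¹ * Abar ∈ Hs := by
  have : Bbar⁻¹ * Abar = (Abar⁻¹ * Bbar)⁻¹ := by group
  rw [this]
  exact inv_mem hG2

-- m7 = A⁻¹ B⁻¹ A A
lemma m7 : Abar⁻¹ * Bbar⁻¹ * Abar * Abar ∈ Hs := by
  have : Abar⁻¹ * Bbar⁻¹ * Abar * Abar =
      (Abar * Abar * Abar)⁻¹ * (Abar * Bbar * Abar⁻¹ * Abar⁻¹)⁻¹ * (Abar * Abar * Abar) := by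
    group
  rw [this]
  exact mul_mem (mul_mem (inv_mem m1) (inv_mem mx3)) m1

/-! ### Coverage -/

def covP (g : PSL2Z) : Prop :=
  g ∈ Hs ∨ Abar⁻¹ * g ∈ Hs ∨ Abar⁻¹ * (Abar⁻¹ * g) ∈ Hs

lemma cover {g : PSL2Z} (hg : g ∈ Subgroup.closure {Abar, Bbar}) : covP g := by
  induction hg using Subgroup.closure_induction_left with
  | one => exact Or.inl (one_mem Hs)
  | mul_left x hx y hy ih =>
    rcases hx with rfl | rfl
    · -- x = Abar
      rcases ih with h | h | h
      · refine Or.inr (Or.inl ?_)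
        have : Abar⁻¹ * (Abar * y) = y := by group
        rw [this]; exact h
      · refine Or.inr (Or.inr ?_)
        have : Abar⁻¹ * (Abar⁻¹ * (Abar * y)) = Abar⁻¹ * y := by group
        rw [this]; exact h
      · refine Or.inl ?_
        have : Abar * y = (Abar * Abar * Abar) * (Abar⁻¹ * (Abar⁻¹ * y)) := by group
        rw [this]; exact mul_mem m1 h
    · -- x = Bbar
      rcases ih with h | h | h
      · refine Or.inr (Or.inl ?_)
        have : Abar⁻¹ * (Bbar * y) = (Abar⁻¹ * Bbar) * y := by group
        rw [this]; exact mul_mem hG2 h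
      · refine Or.inr (Or.inr ?_)
        have : Abar⁻¹ * (Abar⁻¹ * (Bbar * y)) =
            (Abar⁻¹ * (Abar⁻¹ * (Bbar * Abar))) * (Abar⁻¹ * y) := by group
        rw [this]; exact mul_mem m3 h
      · refine Or.inl ?_
        have : Bbar * y = (Bbar * Abar * Abar) * (Abar⁻¹ * (Abar⁻¹ * y)) := by group
        rw [this]; exact mul_mem m4 h
  | inv_mul_cancel x hx y hy ih =>
    rcases hx with rfl | rfl
    · -- x = Abar
      rcases ih with h | h | h
      · refine Or.inr (Or.inr ?_)
        have : Abar⁻¹ * (Abar⁻¹ * (Abar⁻¹ * y)) = (Abar * Abar * Abar)⁻¹ * y := by group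
        rw [this]; exact mul_mem (inv_mem m1) h
      · exact Or.inl h
      · exact Or.inr (Or.inl h)
    · -- x = Bbar
      rcases ih with h | h | h
      · refine Or.inr (Or.inr ?_)
        have : Abar⁻¹ * (Abar⁻¹ * (Bbar⁻¹ * y)) = (Abar⁻¹ * (Abar⁻¹ * Bbar⁻¹)) * y := by group
        rw [this]; exact mul_mem m5 h
      · refine Or.inl ?_
        have : Bbar⁻¹ * y = (Bbar⁻¹ * Abar) * (Abar⁻¹ * y) := by group
        rw [this]; exact mul_mem m6 h
      · refine Or.inr (Or.inl ?_)
        have : Abar⁻¹ * (Bbar⁻¹ * y) =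
            (Abar⁻¹ * Bbar⁻¹ * Abar * Abar) * (Abar⁻¹ * (Abar⁻¹ * y)) := by group
        rw [this]; exact mul_mem m7 h

/-! ### Generation of GammaBar 2 -/

def Kc : Subgroup PSL2Z := Subgroup.closure {Abar, Bbar}

lemma hAKc : Abar ∈ Kc := Subgroup.subset_closure (by left; rfl)
lemma hBKc : Bbar ∈ Kc := Subgroup.subset_closure (by right; rfl)

lemma mul_entry (P M : SL2Z) (i j : Fin 2) :
    (P * M).1 i j = P.1 i 0 * M.1 0 j + P.1 i 1 * M.1 1 j := by
  simp [Matrix.mul_apply, Fin.sum_univ_two]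

lemma hGA : matA ∈ CongruenceSubgroup.Gamma 2 := by
  rw [CongruenceSubgroup.Gamma_mem]
  refine ⟨?_, ?_, ?_, ?_⟩ <;> simp [matA] <;> decide

lemma hGB : matB ∈ CongruenceSubgroup.Gamma 2 := by
  rw [CongruenceSubgroup.Gamma_mem]
  refine ⟨?_, ?_, ?_, ?_⟩ <;> simp [matB] <;> decide

lemma hGAi : matAi ∈ CongruenceSubgroup.Gamma 2 := by
  rw [← matA_inv]; exact inv_mem hGA

lemma hGBi : matBi ∈ CongruenceSubgroup.Gamma 2 := by
  rw [← matB_inv]; exact inv_mem hGB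

lemma hAiKc : projSL matAi ∈ Kc := by
  rw [← matA_inv, map_inv]; exact inv_mem hAKc

lemma hBiKc : projSL matBi ∈ Kc := by
  rw [← matB_inv, map_inv]; exact inv_mem hBKc

lemma stepKc (P M : SL2Z) (hP : projSL P ∈ Kc) (h : projSL (P * M) ∈ Kc) :
    projSL M ∈ Kc := by
  have hM : projSL M = (projSL P)⁻¹ * projSL (P * M) := by
    rw [map_mul]; group
  rw [hM]; exact mul_mem (inv_mem hP) h

lemma gamma2_parity (M : SL2Z) (hM : M ∈ CongruenceSubgroup.Gamma 2) :
    (2 ∣ M.1 0 1) ∧ (2 ∣ M.1 1 0) ∧ ¬(2 ∣ M.1 0 0) ∧ ¬(2 ∣ M.1 1 1) := by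
  rw [CongruenceSubgroup.Gamma_mem] at hM
  obtain ⟨h00, h01, h10, h11⟩ := hM
  refine ⟨?_, ?_, ?_, ?_⟩
  · exact_mod_cast (ZMod.intCast_zmod_eq_zero_iff_dvd _ 2).1 h01
  · exact_mod_cast (ZMod.intCast_zmod_eq_zero_iff_dvd _ 2).1 h10
  · intro hdvd
    have := (ZMod.intCast_zmod_eq_zero_iff_dvd (M.1 0 0) 2).2 (by exact_mod_cast hdvd)
    rw [h00] at this
    exact absurd this (by decide)
  · intro hdvd
    have := (ZMod.intCast_zmod_eq_zero_iff_dvd (M.1 1 1) 2).2 (by exact_mod_cast hdvd)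
    rw [h11] at this
    exact absurd this (by decide)

lemma matA_entries : matA.1 0 0 = 1 ∧ matA.1 0 1 = 2 ∧ matA.1 1 0 = 0 ∧ matA.1 1 1 = 1 := by
  refine ⟨?_, ?_, ?_, ?_⟩ <;> simp [matA]

lemma matAi_entries : matAi.1 0 0 = 1 ∧ matAi.1 0 1 = -2 ∧ matAi.1 1 0 = 0 ∧ matAi.1 1 1 = 1 := by
  refine ⟨?_, ?_, ?_, ?_⟩ <;> simp [matAi]

lemma matB_entries : matB.1 0 0 = 1 ∧ matB.1 0 1 = 0 ∧ matB.1 1 0 = 2 ∧ matB.1 1 1 = 1 := by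
  refine ⟨?_, ?_, ?_, ?_⟩ <;> simp [matB]

lemma matBi_entries : matBi.1 0 0 = 1 ∧ matBi.1 0 1 = 0 ∧ matBi.1 1 0 = -2 ∧ matBi.1 1 1 = 1 := by
  refine ⟨?_, ?_, ?_, ?_⟩ <;> simp [matBi]

lemma gen_c0 : ∀ (n : ℕ) (M : SL2Z), M ∈ CongruenceSubgroup.Gamma 2 → M.1 1 0 = 0 →
    (M.1 0 1).natAbs = n → projSL M ∈ Kc := by
  intro n
  induction n using Nat.strong_induction_on with
  | _ n ih =>
    intro M hM h10 hn
    have hdet := M.2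
    rw [Matrix.det_fin_two] at hdet
    rw [h10] at hdet
    have hmul : M.1 0 0 * M.1 1 1 = 1 := by linarith
    have hpar := gamma2_parity M hM
    by_cases h01 : M.1 0 1 = 0
    · -- M = ±1
      rcases Int.eq_one_or_neg_one_of_mul_eq_one' hmul with ⟨ha, hd⟩ | ⟨ha, hd⟩
      · have hMone : M = 1 := by
          ext i j
          fin_cases i <;> fin_cases j <;>
            simp [ha, hd, h01, h10]
        rw [hMone, map_one]
        exact one_mem Kc
      · have hMneg : M = mNeg := by
          ext i j
          fin_cases i <;> fin_cases j <;>
            simp [mNeg, ha, hd, h01, h10]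
        rw [hMneg, projSL_mNeg]
        exact one_mem Kc
    · -- reduce |b|
      have h2b : 2 ∣ M.1 0 1 := hpar.1
      have had : M.1 0 0 = 1 ∧ M.1 1 1 = 1 ∨ M.1 0 0 = -1 ∧ M.1 1 1 = -1 :=
        Int.eq_one_or_neg_one_of_mul_eq_one' hmul
      -- choose P so that (P*M) 0 1 has smaller natAbs
      have main : ∀ P : SL2Z, P ∈ CongruenceSubgroup.Gamma 2 → projSL P ∈ Kc →
          P.1 0 0 = 1 → P.1 1 0 = 0 → P.1 1 1 = 1 →
          ((M.1 0 1 + P.1 0 1 * M.1 1 1).natAbs < n) → projSL M ∈ Kc := by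
        intro P hPG hPK hP00 hP10 hP11 hlt
        refine stepKc P M hPK (ih _ hlt (P * M) (mul_mem hPG hM) ?_ ?_)
        · rw [mul_entry, hP10, hP11, h10]; ring
        · rw [mul_entry, hP00, one_mul]
      rcases had with ⟨ha, hd⟩ | ⟨ha, hd⟩ <;> by_cases hbpos : 0 < M.1 0 1
      · exact main matAi hGAi hAiKc matAi_entries.1 matAi_entries.2.2.1 matAi_entries.2.2.2
          (by rw [matAi_entries.2.1, hd, ← hn]; omega)
      · exact main matA hGA hAKc matA_entries.1 matA_entries.2.2.1 matA_entries.2.2.2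
          (by rw [matA_entries.2.1, hd, ← hn]; omega)
      · exact main matA hGA hAKc matA_entries.1 matA_entries.2.2.1 matA_entries.2.2.2
          (by rw [matA_entries.2.1, hd, ← hn]; omega)
      · exact main matAi hGAi hAiKc matAi_entries.1 matAi_entries.2.2.1 matAi_entries.2.2.2
          (by rw [matAi_entries.2.1, hd, ← hn]; omega)

lemma gen_main : ∀ (n : ℕ) (M : SL2Z), M ∈ CongruenceSubgroup.Gamma 2 →
    (M.1 0 0).natAbs + (M.1 1 0).natAbs = n → projSL M ∈ Kc := by
  intro n
  induction n using Nat.strong_induction_on with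
  | _ n ih =>
    intro M hM hn
    by_cases hc : M.1 1 0 = 0
    · exact gen_c0 _ M hM hc rfl
    · have hpar := gamma2_parity M hM
      have h2c : 2 ∣ M.1 1 0 := hpar.2.1
      have hodda : ¬ 2 ∣ M.1 0 0 := hpar.2.2.1
      have helperA : ∀ P : SL2Z, P ∈ CongruenceSubgroup.Gamma 2 → projSL P ∈ Kc →
          P.1 0 0 = 1 → P.1 1 0 = 0 → P.1 1 1 = 1 →
          ((M.1 0 0 + P.1 0 1 * M.1 1 0).natAbs + (M.1 1 0).natAbs < n) → projSL M ∈ Kc := by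
        intro P hPG hPK hP00 hP10 hP11 hlt
        refine stepKc P M hPK (ih _ ?_ (P * M) (mul_mem hPG hM) rfl)
        have e1 : (P * M).1 0 0 = M.1 0 0 + P.1 0 1 * M.1 1 0 := by
          rw [mul_entry, hP00]; ring
        have e2 : (P * M).1 1 0 = M.1 1 0 := by
          rw [mul_entry, hP10, hP11]; ring
        rw [e1, e2]; exact hlt
      have helperB : ∀ P : SL2Z, P ∈ CongruenceSubgroup.Gamma 2 → projSL P ∈ Kc →
          P.1 0 0 = 1 → P.1 0 1 = 0 → P.1 1 1 = 1 →
          ((M.1 0 0).natAbs + (P.1 1 0 * M.1 0 0 + M.1 1 0).natAbs < n) → projSL M ∈ Kc := by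
        intro P hPG hPK hP00 hP01 hP11 hlt
        refine stepKc P M hPK (ih _ ?_ (P * M) (mul_mem hPG hM) rfl)
        have e1 : (P * M).1 0 0 = M.1 0 0 := by
          rw [mul_entry, hP00, hP01]; ring
        have e2 : (P * M).1 1 0 = P.1 1 0 * M.1 0 0 + M.1 1 0 := by
          rw [mul_entry, hP11]; ring
        rw [e1, e2]; exact hlt
      have habs : (M.1 0 0).natAbs ≠ (M.1 1 0).natAbs := by omega
      rcases lt_or_gt_of_ne habs with hlt | hlt
      · -- |a| < |c| : B-step
        by_cases ha : 0 < M.1 0 0 <;> by_cases hcpos : 0 < M.1 1 0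
        · exact helperB matBi hGBi hBiKc matBi_entries.1 matBi_entries.2.1 matBi_entries.2.2.2
            (by rw [matBi_entries.2.2.1]; omega)
        · exact helperB matB hGB hBKc matB_entries.1 matB_entries.2.1 matB_entries.2.2.2
            (by rw [matB_entries.2.2.1]; omega)
        · exact helperB matB hGB hBKc matB_entries.1 matB_entries.2.1 matB_entries.2.2.2
            (by rw [matB_entries.2.2.1]; omega)
        · exact helperB matBi hGBi hBiKc matBi_entries.1 matBi_entries.2.1 matBi_entries.2.2.2
            (by rw [matBi_entries.2.2.1]; omega)
      · -- |c| < |a| : A-step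
        by_cases ha : 0 < M.1 0 0 <;> by_cases hcpos : 0 < M.1 1 0
        · exact helperA matAi hGAi hAiKc matAi_entries.1 matAi_entries.2.2.1 matAi_entries.2.2.2
            (by rw [matAi_entries.2.1]; omega)
        · exact helperA matA hGA hAKc matA_entries.1 matA_entries.2.2.1 matA_entries.2.2.2
            (by rw [matA_entries.2.1]; omega)
        · exact helperA matA hGA hAKc matA_entries.1 matA_entries.2.2.1 matA_entries.2.2.2
            (by rw [matA_entries.2.1]; omega)
        · exact helperA matAi hGAi hAiKc matAi_entries.1 matAi_entries.2.2.1 matAi_entries.2.2.2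
            (by rw [matAi_entries.2.1]; omega)

/-! ### Final assembly -/

lemma Abar_mem_GammaBar : Abar ∈ GammaBar 2 := ⟨matA, hGA, rfl⟩
lemma Bbar_mem_GammaBar : Bbar ∈ GammaBar 2 := ⟨matB, hGB, rfl⟩

lemma GammaBar2_eq : GammaBar 2 = Kc := by
  apply le_antisymm
  · rintro g ⟨M, hM, rfl⟩
    exact gen_main _ M hM rfl
  · rw [Kc, Subgroup.closure_le]
    rintro g (rfl | rfl)
    · exact Abar_mem_GammaBar
    · exact Bbar_mem_GammaBar

lemma Hs_le_GammaBar : Hs ≤ GammaBar 2 := by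
  rw [Hs, Subgroup.closure_le]
  rintro g (rfl | rfl | rfl | rfl)
  · exact mul_mem Bbar_mem_GammaBar (inv_mem Abar_mem_GammaBar)
  · exact mul_mem (inv_mem Abar_mem_GammaBar) Bbar_mem_GammaBar
  · exact mul_mem (mul_mem (inv_mem Bbar_mem_GammaBar) (inv_mem Abar_mem_GammaBar))
      (pow_mem Bbar_mem_GammaBar 2)
  · exact pow_mem (inv_mem Bbar_mem_GammaBar) 3

theorem three_star_index_three' :
    Hs ≤ GammaBar 2 ∧ Hs.relIndex (GammaBar 2) = 3 := by
  refine ⟨Hs_le_GammaBar, ?_⟩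
  rw [GammaBar2_eq]
  show (Hs.subgroupOf Kc).index = 3
  show Nat.card (Kc ⧸ Hs.subgroupOf Kc) = 3
  set a1 : Kc := ⟨Abar, hAKc⟩ with ha1
  have hsurj : ∀ q : Kc ⧸ Hs.subgroupOf Kc,
      q = QuotientGroup.mk 1 ∨ q = QuotientGroup.mk a1 ∨ q = QuotientGroup.mk (a1 * a1) := by
    intro q
    obtain ⟨g, rfl⟩ := QuotientGroup.mk_surjective q
    rcases cover g.2 with h | h | h
    · left
      rw [QuotientGroup.eq]
      rw [Subgroup.mem_subgroupOf]
      simpa using inv_mem h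
    · right; left
      rw [QuotientGroup.eq]
      rw [Subgroup.mem_subgroupOf]
      have := inv_mem h
      simpa [mul_inv_rev] using this
    · right; right
      rw [QuotientGroup.eq]
      rw [Subgroup.mem_subgroupOf]
      have := inv_mem h
      simpa [mul_inv_rev, mul_assoc] using this
  have h01 : (QuotientGroup.mk 1 : Kc ⧸ Hs.subgroupOf Kc) ≠ QuotientGroup.mk a1 := by
    intro h
    rw [QuotientGroup.eq, Subgroup.mem_subgroupOf] at h
    simp at h
    exact notmem_A h
  have h02 : (QuotientGroup.mk 1 : Kc ⧸ Hs.subgroupOf Kc) ≠ QuotientGroup.mk (a1 * a1) := by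
    intro h
    rw [QuotientGroup.eq, Subgroup.mem_subgroupOf] at h
    simp at h
    exact notmem_A2 h
  have h12 : (QuotientGroup.mk a1 : Kc ⧸ Hs.subgroupOf Kc) ≠ QuotientGroup.mk (a1 * a1) := by
    intro h
    rw [QuotientGroup.eq, Subgroup.mem_subgroupOf] at h
    simp at h
    exact notmem_A h
  have huniv : (Set.univ : Set (Kc ⧸ Hs.subgroupOf Kc)) =
      {QuotientGroup.mk 1, QuotientGroup.mk a1, QuotientGroup.mk (a1 * a1)} := by
    ext q
    simp only [Set.mem_univ, Set.mem_insert_iff, Set.mem_singleton_iff, true_iff]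
    exact hsurj q
  calc Nat.card (Kc ⧸ Hs.subgroupOf Kc) = (Set.univ : Set (Kc ⧸ Hs.subgroupOf Kc)).ncard :=
        (Set.ncard_univ _).symm
    _ = ({QuotientGroup.mk 1, QuotientGroup.mk a1, QuotientGroup.mk (a1 * a1)} :
        Set (Kc ⧸ Hs.subgroupOf Kc)).ncard := by rw [huniv]
    _ = 3 := by
        rw [Set.ncard_insert_of_notMem (by simp [h01, h02]), Set.ncard_pair h12]


/-- The group of the 3-star graph: `⟨BA⁻¹, A⁻¹B, B⁻¹A⁻¹B², B⁻³⟩` is a subgroup of `Γ̄(2)`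
of index 3 in `Γ̄(2)`. -/
theorem three_star_index_three :
    Subgroup.closure ({Bbar * Abar⁻¹, Abar⁻¹ * Bbar, Bbar⁻¹ * Abar⁻¹ * Bbar ^ 2,
        Bbar⁻¹ ^ 3} : Set PSL2Z) ≤ GammaBar 2 ∧
    (Subgroup.closure ({Bbar * Abar⁻¹, Abar⁻¹ * Bbar, Bbar⁻¹ * Abar⁻¹ * Bbar ^ 2,
        Bbar⁻¹ ^ 3} : Set PSL2Z)).relIndex (GammaBar 2) = 3 :=
  three_star_index_three'
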